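/- Let X be a measurable space, let μS and μT be probability measures on X, let G be a set of measurable hypotheses g : X → Bool, and let fS, fT : X → Bool be measurable labeling functions. Then for any two hypotheses g, g* ∈ G, err_{μT}(g, fT) ≤ err_{μS}(g, fS) + (1/2)·d_{GΔG}(μS, μT) + err_{μS}(g*, fS) + err_{μT}(g*, fT). -/
import Mathlib


open MeasureTheory

/-- Disagreement error of two Boolean hypotheses under a measure. -/
noncomputable def err {X : Type*} [MeasurableSpace X] (μ : Measure X) (g g' : X → Bool) : ℝ :=
  (μ {x | g x ≠ g' x}).toReal

/-- The `GΔG`-divergence between two measures, for a hypothesis class `G`. -/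
noncomputable def dGDG {X : Type*} [MeasurableSpace X] (G : Set (X → Bool))
    (μ ν : Measure X) : ℝ :=
  2 * sSup {r : ℝ | ∃ g ∈ G, ∃ g' ∈ G, r = |err μ g g' - err ν g g'|}

lemma err_nonneg {X : Type*} [MeasurableSpace X] (μ : Measure X) (g g' : X → Bool) :
    0 ≤ err μ g g' := ENNReal.toReal_nonneg

lemma err_le_one {X : Type*} [MeasurableSpace X] (μ : Measure X) [IsProbabilityMeasure μ]
    (g g' : X → Bool) : err μ g g' ≤ 1 := by
  have := prob_le_one (μ := μ) (s := {x | g x ≠ g' x})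
  simpa [err] using ENNReal.toReal_mono ENNReal.one_ne_top this

lemma err_symm {X : Type*} [MeasurableSpace X] (μ : Measure X) (g g' : X → Bool) :
    err μ g g' = err μ g' g := by
  unfold err
  have : {x | g x ≠ g' x} = {x | g' x ≠ g x} := by ext x; simp [ne_comm]
  rw [this]

lemma err_triangle {X : Type*} [MeasurableSpace X] (μ : Measure X) [IsFiniteMeasure μ]
    (a b c : X → Bool) : err μ a c ≤ err μ a b + err μ b c := by
  have hsub : {x | a x ≠ c x} ⊆ {x | a x ≠ b x} ∪ {x | b x ≠ c x} := by
    intro x hx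
    by_cases h : a x = b x
    · right; intro hbc; exact hx (h.trans hbc)
    · left; exact h
  have h1 : μ {x | a x ≠ c x} ≤ μ {x | a x ≠ b x} + μ {x | b x ≠ c x} :=
    le_trans (measure_mono hsub) (measure_union_le _ _)
  have h2 := ENNReal.toReal_mono (a := μ {x | a x ≠ c x})
    (ENNReal.add_ne_top.mpr ⟨measure_ne_top μ _, measure_ne_top μ _⟩) h1
  rwa [ENNReal.toReal_add (measure_ne_top μ _) (measure_ne_top μ _)] at h2

theorem target_risk_bound_of_hypothesis {X : Type*} [MeasurableSpace X]
    (μS μT : Measure X) [IsProbabilityMeasure μS] [IsProbabilityMeasure μT]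
    (G : Set (X → Bool)) (hGmeas : ∀ g ∈ G, Measurable g)
    (fS fT : X → Bool) (hfS : Measurable fS) (hfT : Measurable fT)
    (g gstar : X → Bool) (hg : g ∈ G) (hgstar : gstar ∈ G) :
    err μT g fT ≤ err μS g fS + (1 / 2) * dGDG G μS μT +
      err μS gstar fS + err μT gstar fT := by
  set S := {r : ℝ | ∃ g ∈ G, ∃ g' ∈ G, r = |err μS g g' - err μT g g'|}
  have hbdd : BddAbove S := by
    refine ⟨1, fun r hr => ?_⟩
    obtain ⟨a, _, b, _, rfl⟩ := hr
    rw [abs_sub_le_iff]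
    constructor <;> nlinarith [err_le_one μS a b, err_le_one μT a b,
      err_nonneg μS a b, err_nonneg μT a b]
  have hmem : |err μS g gstar - err μT g gstar| ∈ S := ⟨g, hg, gstar, hgstar, rfl⟩
  have hsup : |err μS g gstar - err μT g gstar| ≤ sSup S := le_csSup hbdd hmem
  have key : err μT g gstar ≤ err μS g gstar + (1 / 2) * dGDG G μS μT := by
    have : err μT g gstar - err μS g gstar ≤ sSup S := by
      linarith [hsup, neg_abs_le (err μS g gstar - err μT g gstar)]
    have : dGDG G μS μT = 2 * sSup S := rfl
    linarith [hsup, neg_abs_le (err μS g gstar - err μT g gstar)]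
  have t1 : err μT g fT ≤ err μT g gstar + err μT gstar fT := err_triangle μT g gstar fT
  have t2 : err μS g gstar ≤ err μS g fS + err μS fS gstar := err_triangle μS g fS gstar
  have t3 : err μS fS gstar = err μS gstar fS := err_symm μS fS gstar
  linarith
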